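/- For Banach spaces E and A, the space W(E*, A) of linear operators E* → A that are weak*-continuous on bounded sets is a closed subspace of the space K(E*, A) of compact operators, with respect to the operator norm. -/

import Mathlib

open NormedSpace

/-- `Λ` is weak*-continuous on bounded sets. -/
def IsWcbs {E A : Type*} [NormedAddCommGroup E] [NormedSpace ℂ E]
    [TopologicalSpace A] (Λ : StrongDual ℂ E → A) : Prop :=
  ContinuousOn (fun ψ : WeakDual ℂ E => Λ (WeakDual.toStrongDual ψ))
    {ψ : WeakDual ℂ E | ‖WeakDual.toStrongDual ψ‖ ≤ 1}

/-- `W(E*, A)` is a closed subspace of the compact operators `K(E*, A)`: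
wcbs operators are compact, the wcbs operators form a subspace, and this subspace is
closed in the operator norm. -/
theorem wcbs_closed_subspace_of_compact {E A : Type*}
    [NormedAddCommGroup E] [NormedSpace ℂ E] [CompleteSpace E]
    [NormedAddCommGroup A] [NormedSpace ℂ A] [CompleteSpace A] :
    (∀ Λ : StrongDual ℂ E →L[ℂ] A, IsWcbs ⇑Λ → IsCompactOperator ⇑Λ) ∧
    (∀ Λ₁ Λ₂ : StrongDual ℂ E →L[ℂ] A, IsWcbs ⇑Λ₁ → IsWcbs ⇑Λ₂ → IsWcbs ⇑(Λ₁ + Λ₂)) ∧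
    (∀ (c : ℂ) (Λ : StrongDual ℂ E →L[ℂ] A), IsWcbs ⇑Λ → IsWcbs ⇑(c • Λ)) ∧
    IsClosed {Λ : StrongDual ℂ E →L[ℂ] A | IsWcbs ⇑Λ} := by
  refine ⟨?_, ?_, ?_, ?_⟩
  · intro Λ hΛ
    have hball : IsCompact {ψ : WeakDual ℂ E | ‖WeakDual.toStrongDual ψ‖ ≤ 1} := by
      have := WeakDual.isCompact_closedBall (𝕜 := ℂ) (E := E) (0 : StrongDual ℂ E) 1
      convert this using 1
      ext ψ; simp [Metric.mem_closedBall, dist_zero_right]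
    have himg : IsCompact ((fun ψ : WeakDual ℂ E => Λ (WeakDual.toStrongDual ψ)) ''
        {ψ : WeakDual ℂ E | ‖WeakDual.toStrongDual ψ‖ ≤ 1}) :=
      hball.image_of_continuousOn hΛ
    refine ⟨_, himg, ?_⟩
    refine Filter.mem_of_superset (Metric.closedBall_mem_nhds (0 : StrongDual ℂ E) one_pos) ?_
    intro x hx
    exact ⟨WeakDual.toStrongDual.symm x, by
      simpa [Metric.mem_closedBall, dist_zero_right] using hx, rfl⟩
  · intro Λ₁ Λ₂ h₁ h₂
    exact h₁.add h₂
  · intro c Λ h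
    exact h.const_smul c
  · haveI : SequentialSpace (StrongDual ℂ E →L[ℂ] A) := by
      letI : PseudoMetricSpace (StrongDual ℂ E →L[ℂ] A) := inferInstance
      exact inferInstance
    rw [← isSeqClosed_iff_isClosed]
    intro f Λ hf hlim
    have : TendstoUniformlyOn
        (fun n (ψ : WeakDual ℂ E) => (f n) (WeakDual.toStrongDual ψ))
        (fun ψ : WeakDual ℂ E => Λ (WeakDual.toStrongDual ψ)) Filter.atTop
        {ψ : WeakDual ℂ E | ‖WeakDual.toStrongDual ψ‖ ≤ 1} := by
      rw [Metric.tendstoUniformlyOn_iff]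
      intro ε hε
      have := ((Metric.tendsto_atTop (α := StrongDual ℂ E →L[ℂ] A)).mp (Filter.Tendsto.comp Filter.tendsto_id hlim))
        ε hε
      obtain ⟨N, hN⟩ := this
      refine Filter.eventually_atTop.mpr ⟨N, fun n hn ψ hψ => ?_⟩
      have hfn := hN n hn
      calc dist (Λ (WeakDual.toStrongDual ψ)) ((f n) (WeakDual.toStrongDual ψ))
          = ‖(Λ - f n) (WeakDual.toStrongDual ψ)‖ := by
            simp [dist_eq_norm]
        _ ≤ ‖Λ - f n‖ * ‖WeakDual.toStrongDual ψ‖ := (Λ - f n).le_opNorm _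
        _ ≤ ‖Λ - f n‖ * 1 := by
            exact mul_le_mul_of_nonneg_left hψ (ContinuousLinearMap.opNorm_nonneg _)
        _ < ε := by
            rw [mul_one]
            simpa [dist_eq_norm (E := StrongDual ℂ E →L[ℂ] A), norm_sub_rev (E := StrongDual ℂ E →L[ℂ] A)] using hfn
    exact this.continuousOn (Filter.Eventually.of_forall fun n => hf n).frequently
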